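/- Let β₀, β₁ ∈ (0,1) with β₀ + β₁ > 1. For every finite binary string σ, P_{β₀,β₁}(σ0 ∈ Prune(ω) and σ1 ∉ Prune(ω) | σ ∈ Prune(ω)) = 1 − β₁; that is, the conditional probability that a node of the pruned infinite Galton–Watson tree has only a left child is 1 − β₁. -/

import Mathlib

open MeasureTheory

/-- The Galton–Watson tree of `ω`: all binary strings all of whose nonempty prefixes survive. -/
def gwTree (ω : {σ : List Bool // σ ≠ []} → Bool) : Set (List Bool) :=
  {σ | ∀ τ : {σ : List Bool // σ ≠ []}, τ.val <+: σ → ω τ = true}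

/-- The pruned tree: nodes of the Galton–Watson tree above which the tree is infinite
(has infinitely many extensions in the tree). -/
def gwPrune (ω : {σ : List Bool // σ ≠ []} → Bool) : Set (List Bool) :=
  {σ | σ ∈ gwTree ω ∧ {τ | σ <+: τ ∧ τ ∈ gwTree ω}.Infinite}

/-- Probability that coordinate `σ` takes value `b`: it is `1` (survives) with probability
`β₀` if the last bit of `σ` is `0`, and `β₁` if the last bit of `σ` is `1`. -/
def gwP (β₀ β₁ : ℝ) (σ : {σ : List Bool // σ ≠ []}) (b : Bool) : ℝ :=
  if b then (if σ.val.getLast σ.prop = false then β₀ else β₁)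
  else 1 - (if σ.val.getLast σ.prop = false then β₀ else β₁)

/-- `P` is the product measure `P_{β₀,β₁}`: a probability measure with independent coordinates,
coordinate `σ` equal to `1` with probability `β₀` or `β₁` according to the last bit of `σ`,
as expressed by its finite-dimensional distributions. -/
def IsGWMeasure (β₀ β₁ : ℝ) (P : Measure ({σ : List Bool // σ ≠ []} → Bool)) : Prop :=
  IsProbabilityMeasure P ∧
    ∀ (S : Finset {σ : List Bool // σ ≠ []}) (f : {σ : List Bool // σ ≠ []} → Bool),
      P {ω | ∀ σ ∈ S, ω σ = f σ} = ENNReal.ofReal (∏ σ ∈ S, gwP β₀ β₁ σ (f σ))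

namespace GW

open scoped Classical

abbrev Idx : Type := {σ : List Bool // σ ≠ []}
abbrev Om : Type := Idx → Bool

def cyl (S : Finset Idx) (f : Idx → Bool) : Set Om := {ω | ∀ σ ∈ S, ω σ = f σ}

noncomputable def extend (S : Finset Idx) (g : ↥S → Bool) : Idx → Bool :=
  fun σ => if h : σ ∈ S then g ⟨σ, h⟩ else false

def DependsOn (S : Finset Idx) (A : Set Om) : Prop :=
  ∀ ω ω' : Om, (∀ σ ∈ S, ω σ = ω' σ) → ω ∈ A → ω' ∈ A

lemma DependsOn.mono {S T : Finset Idx} {A : Set Om} (h : DependsOn S A) (hST : S ⊆ T) :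
    DependsOn T A := fun ω ω' hag => h ω ω' (fun σ hσ => hag σ (hST hσ))

lemma DependsOn.inter {S T : Finset Idx} {A B : Set Om} (hA : DependsOn S A)
    (hB : DependsOn T B) : DependsOn (S ∪ T) (A ∩ B) := fun ω ω' hag hmem =>
  ⟨hA ω ω' (fun σ hσ => hag σ (Finset.mem_union_left _ hσ)) hmem.1,
   hB ω ω' (fun σ hσ => hag σ (Finset.mem_union_right _ hσ)) hmem.2⟩

lemma eq_biUnion {S : Finset Idx} {A : Set Om} (hA : DependsOn S A) :
    A = ⋃ g ∈ Finset.univ.filter (fun g : ↥S → Bool => extend S g ∈ A),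
        cyl S (extend S g) := by
  ext ω
  simp only [Set.mem_iUnion, Finset.mem_filter, Finset.mem_univ, true_and]
  constructor
  · intro hω
    refine ⟨fun s => ω s, ?_, ?_⟩
    · exact hA ω _ (fun σ hσ => by simp [extend, hσ]) hω
    · intro σ hσ; simp [cyl, extend, hσ]
  · rintro ⟨g, hg, hcyl⟩
    exact hA _ ω (fun σ hσ => (hcyl σ hσ).symm) hg

lemma measurableSet_cyl (S : Finset Idx) (f : Idx → Bool) : MeasurableSet (cyl S f) := by
  have : cyl S f = ⋂ σ ∈ (S : Set Idx), (fun ω : Om => ω σ) ⁻¹' {f σ} := by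
    ext ω; simp [cyl]
  rw [this]
  exact MeasurableSet.biInter S.countable_toSet
    (fun σ _ => (measurable_pi_apply σ) (measurableSet_singleton (f σ)))

lemma DependsOn.measurableSet {S : Finset Idx} {A : Set Om} (hA : DependsOn S A) :
    MeasurableSet A := by
  rw [eq_biUnion hA]
  exact (Finset.measurableSet_biUnion _ fun g _ => measurableSet_cyl _ _)

lemma cyl_disjoint {S : Finset Idx} {g g' : ↥S → Bool} (h : g ≠ g') :
    Disjoint (cyl S (extend S g)) (cyl S (extend S g')) := by
  rw [Set.disjoint_left]
  intro ω h1 h2 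
  apply h
  funext s
  have e1 := h1 s s.2
  have e2 := h2 s s.2
  simp only [extend, dif_pos s.2] at e1 e2
  rw [← e1, ← e2]

lemma gwP_nonneg {β₀ β₁ : ℝ} (h0 : 0 < β₀) (h0' : β₀ < 1) (h1 : 0 < β₁) (h1' : β₁ < 1)
    (σ : Idx) (b : Bool) : 0 ≤ gwP β₀ β₁ σ b := by
  simp only [gwP]; split_ifs <;> linarith

lemma prob_of_dependsOn {β₀ β₁ : ℝ} (h0 : 0 < β₀) (h0' : β₀ < 1) (h1 : 0 < β₁) (h1' : β₁ < 1)
    {P : Measure Om} (hP : IsGWMeasure β₀ β₁ P) {S : Finset Idx} {A : Set Om}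
    (hA : DependsOn S A) :
    P A = ENNReal.ofReal (∑ g ∈ Finset.univ.filter (fun g : ↥S → Bool => extend S g ∈ A),
      ∏ σ ∈ S, gwP β₀ β₁ σ (extend S g σ)) := by
  have hq : P A = ∑ g ∈ Finset.univ.filter (fun g : ↥S → Bool => extend S g ∈ A),
      P (cyl S (extend S g)) := by
    conv_lhs => rw [eq_biUnion hA]
    exact measure_biUnion_finset (fun g _ g' _ hne => cyl_disjoint hne)
      (fun g _ => measurableSet_cyl _ _)
  rw [hq, ENNReal.ofReal_sum_of_nonneg (fun g _ => Finset.prod_nonneg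
      (fun σ _ => gwP_nonneg h0 h0' h1 h1' σ _))]
  exact Finset.sum_congr rfl fun g _ => hP.2 S (extend S g)

noncomputable def glue {S T : Finset Idx} (hST : Disjoint S T) :
    ((↥S → Bool) × (↥T → Bool)) ≃ (↥(S ∪ T) → Bool) where
  toFun p x := if h : ↑x ∈ S then p.1 ⟨x, h⟩
    else p.2 ⟨x, (Finset.mem_union.1 x.2).resolve_left h⟩
  invFun g := (fun s => g ⟨s, Finset.mem_union_left _ s.2⟩,
               fun t => g ⟨t, Finset.mem_union_right _ t.2⟩)
  left_inv p := by
    obtain ⟨a, b⟩ := p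
    refine Prod.ext ?_ ?_
    · funext s; simp only; rw [dif_pos s.2]
    · funext t; simp only
      rw [dif_neg (Finset.disjoint_right.1 hST t.2)]
  right_inv g := by
    funext x
    by_cases h : ↑x ∈ S
    · simp only; rw [dif_pos h]
    · simp only; rw [dif_neg h]

lemma extend_glue_left {S T : Finset Idx} (hST : Disjoint S T) (a : ↥S → Bool)
    (b : ↥T → Bool) {σ : Idx} (hσ : σ ∈ S) :
    extend (S ∪ T) (glue hST (a, b)) σ = extend S a σ := by
  simp only [extend, glue, Equiv.coe_fn_mk, dif_pos hσ,
    dif_pos (Finset.mem_union_left T hσ)]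

lemma extend_glue_right {S T : Finset Idx} (hST : Disjoint S T) (a : ↥S → Bool)
    (b : ↥T → Bool) {σ : Idx} (hσ : σ ∈ T) :
    extend (S ∪ T) (glue hST (a, b)) σ = extend T b σ := by
  have hns : σ ∉ S := Finset.disjoint_right.1 hST hσ
  simp only [extend, glue, Equiv.coe_fn_mk, dif_pos hσ,
    dif_pos (Finset.mem_union_right S hσ), dif_neg hns]

lemma prob_inter {β₀ β₁ : ℝ} (h0 : 0 < β₀) (h0' : β₀ < 1) (h1 : 0 < β₁) (h1' : β₁ < 1)
    {P : Measure Om} (hP : IsGWMeasure β₀ β₁ P) {S T : Finset Idx} {A B : Set Om}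
    (hA : DependsOn S A) (hB : DependsOn T B) (hST : Disjoint S T) :
    P (A ∩ B) = P A * P B := by
  have hnn : ∀ (U : Finset Idx) (f : Idx → Bool), 0 ≤ ∏ σ ∈ U, gwP β₀ β₁ σ (f σ) :=
    fun U f => Finset.prod_nonneg fun σ _ => gwP_nonneg h0 h0' h1 h1' σ _
  rw [prob_of_dependsOn h0 h0' h1 h1' hP (hA.inter hB),
      prob_of_dependsOn h0 h0' h1 h1' hP hA,
      prob_of_dependsOn h0 h0' h1 h1' hP hB,
      ← ENNReal.ofReal_mul (Finset.sum_nonneg fun g _ => hnn S _)]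
  congr 1
  have key : ∀ (a : ↥S → Bool) (b : ↥T → Bool),
      (@ite _ (extend (S ∪ T) (glue hST (a, b)) ∈ A ∩ B) (Classical.propDecidable _)
        (∏ σ ∈ S ∪ T, gwP β₀ β₁ σ (extend (S ∪ T) (glue hST (a, b)) σ)) 0)
      = (if extend S a ∈ A then ∏ σ ∈ S, gwP β₀ β₁ σ (extend S a σ) else 0) *
        (if extend T b ∈ B then ∏ σ ∈ T, gwP β₀ β₁ σ (extend T b σ) else 0) := by
    intro a b
    have hAiff : (extend (S ∪ T) (glue hST (a, b)) ∈ A) ↔ extend S a ∈ A :=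
      ⟨fun h => hA _ _ (fun σ hσ => extend_glue_left hST a b hσ) h,
       fun h => hA _ _ (fun σ hσ => (extend_glue_left hST a b hσ).symm) h⟩
    have hBiff : (extend (S ∪ T) (glue hST (a, b)) ∈ B) ↔ extend T b ∈ B :=
      ⟨fun h => hB _ _ (fun σ hσ => extend_glue_right hST a b hσ) h,
       fun h => hB _ _ (fun σ hσ => (extend_glue_right hST a b hσ).symm) h⟩
    have hprod : ∏ σ ∈ S ∪ T, gwP β₀ β₁ σ (extend (S ∪ T) (glue hST (a, b)) σ)
        = (∏ σ ∈ S, gwP β₀ β₁ σ (extend S a σ)) * (∏ σ ∈ T, gwP β₀ β₁ σ (extend T b σ)) := by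
      rw [Finset.prod_union hST]
      congr 1
      · exact Finset.prod_congr rfl fun σ hσ => by rw [extend_glue_left hST a b hσ]
      · exact Finset.prod_congr rfl fun σ hσ => by rw [extend_glue_right hST a b hσ]
    by_cases ha : extend S a ∈ A <;> by_cases hb : extend T b ∈ B <;>
      simp [Set.mem_inter_iff, hAiff, hBiff, ha, hb, hprod]
  simp only [Finset.sum_filter]
  rw [← Equiv.sum_comp (glue hST), Fintype.sum_prod_type, Finset.sum_mul_sum]
  exact Finset.sum_congr rfl fun a _ => Finset.sum_congr rfl fun b _ => key a b



lemma apne {τ π : List Bool} (h : π ≠ []) : τ ++ π ≠ [] :=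
  fun hc => h (List.append_eq_nil_iff.mp hc).2

def cnode (τ : List Bool) (b : Bool) : Idx := ⟨τ ++ [b], apne (List.cons_ne_nil b [])⟩

def lists : ℕ → Finset (List Bool)
  | 0 => {[]}
  | n+1 => {[]} ∪ ((lists n).image (List.cons false)) ∪ ((lists n).image (List.cons true))

lemma mem_lists : ∀ (n : ℕ) (l : List Bool), l ∈ lists n ↔ l.length ≤ n := by
  intro n
  induction n with
  | zero => intro l; simp [lists, List.length_eq_zero_iff]
  | succ n ih =>
    intro l
    cases l with
    | nil => simp [lists]
    | cons b t =>
      have : (b :: t ∈ lists (n+1)) ↔ t ∈ lists n := by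
        cases b <;> simp [lists, List.cons.injEq]
      rw [this, ih]
      simp [Nat.succ_le_succ_iff]

def tcoord (τ : List Bool) (n : ℕ) : Finset Idx :=
  (((lists n).erase []).image (fun π => τ ++ π)).subtype (fun l => l ≠ [])

lemma mem_tcoord {τ : List Bool} {n : ℕ} {x : Idx} :
    x ∈ tcoord τ n ↔ ∃ π, π ≠ [] ∧ π.length ≤ n ∧ x.val = τ ++ π := by
  simp only [tcoord, Finset.mem_subtype, Finset.mem_image, Finset.mem_erase, mem_lists]
  constructor
  · rintro ⟨π, ⟨hne, hlen⟩, heq⟩; exact ⟨π, hne, hlen, heq.symm⟩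
  · rintro ⟨π, hne, hlen, heq⟩; exact ⟨π, ⟨hne, hlen⟩, heq.symm⟩

def SurvSet (τ : List Bool) (n : ℕ) : Set Om :=
  {ω | ∃ ρ : List Bool, ρ.length = n ∧
    ∀ (π : List Bool) (h : π ≠ []), π <+: ρ → ω ⟨τ ++ π, apne h⟩ = true}

lemma survSet_dependsOn (τ : List Bool) (n : ℕ) : DependsOn (tcoord τ n) (SurvSet τ n) := by
  rintro ω ω' hag ⟨ρ, hlen, hρ⟩
  refine ⟨ρ, hlen, fun π hπ hpre => ?_⟩
  rw [← hag ⟨τ ++ π, apne hπ⟩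
    (mem_tcoord.2 ⟨π, hπ, by rw [← hlen]; exact hpre.length_le, rfl⟩)]
  exact hρ π hπ hpre

lemma survSet_antitone (τ : List Bool) : Antitone (fun n => SurvSet τ n) := by
  refine antitone_nat_of_succ_le fun n => ?_
  rintro ω ⟨ρ, hlen, hρ⟩
  exact ⟨ρ.take n, by rw [List.length_take, hlen]; exact min_eq_left (Nat.le_succ n),
    fun π hπ hpre => hρ π hπ (hpre.trans (List.take_prefix n ρ))⟩

def evSet (τ : List Bool) (b : Bool) : Set Om := {ω | ω (cnode τ b) = true}

lemma evSet_dependsOn (τ : List Bool) (b : Bool) :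
    DependsOn {cnode τ b} (evSet τ b) := fun ω ω' hag h => by
  have heq := hag (cnode τ b) (Finset.mem_singleton_self _)
  show ω' (cnode τ b) = true
  rw [← heq]; exact h

noncomputable def bprob (β₀ β₁ : ℝ) (b : Bool) : ℝ := if b = false then β₀ else β₁

lemma survSet_zero (τ : List Bool) : SurvSet τ 0 = Set.univ := by
  ext ω
  simp only [SurvSet, Set.mem_setOf_eq, Set.mem_univ, iff_true]
  exact ⟨[], rfl, fun π hπ hpre => absurd (List.prefix_nil.mp hpre) hπ⟩

lemma mem_surv_succ_of {τ : List Bool} {n : ℕ} {b : Bool} {ω : Om}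
    (hb : ω ∈ evSet τ b) (hs : ω ∈ SurvSet (τ ++ [b]) n) : ω ∈ SurvSet τ (n+1) := by
  obtain ⟨ρ₀, hlen, hρ⟩ := hs
  refine ⟨b :: ρ₀, by simp [hlen], fun π hπ hpre => ?_⟩
  cases π with
  | nil => exact absurd rfl hπ
  | cons c π₀ =>
    obtain ⟨hcb, hpre₀⟩ := List.cons_prefix_cons.mp hpre
    subst hcb
    by_cases hπ₀ : π₀ = []
    · subst hπ₀; exact hb
    · have h2 := hρ π₀ hπ₀ hpre₀
      convert h2 using 2
      exact Subtype.ext (List.append_cons τ c π₀)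

lemma survSet_succ (τ : List Bool) (n : ℕ) :
    SurvSet τ (n+1) = (evSet τ false ∩ SurvSet (τ ++ [false]) n) ∪
      (evSet τ true ∩ SurvSet (τ ++ [true]) n) := by
  ext ω
  constructor
  · rintro ⟨ρ, hlen, hρ⟩
    cases ρ with
    | nil => simp at hlen
    | cons b ρ₀ =>
      have hb : ω ∈ evSet τ b := hρ [b] (List.cons_ne_nil b []) ⟨ρ₀, rfl⟩
      have hs : ω ∈ SurvSet (τ ++ [b]) n := by
        refine ⟨ρ₀, Nat.succ_injective hlen, fun π hπ hpre => ?_⟩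
        have h2 := hρ (b :: π) (List.cons_ne_nil b π) (List.cons_prefix_cons.mpr ⟨rfl, hpre⟩)
        convert h2 using 2
        exact Subtype.ext (List.append_cons τ b π).symm
      cases b
      · exact Or.inl ⟨hb, hs⟩
      · exact Or.inr ⟨hb, hs⟩
  · rintro (⟨hb, hs⟩ | ⟨hb, hs⟩)
    · exact mem_surv_succ_of hb hs
    · exact mem_surv_succ_of hb hs

noncomputable def u (β₀ β₁ : ℝ) : ℕ → ℝ
  | 0 => 1
  | n+1 => 1 - (1 - β₀ * u β₀ β₁ n) * (1 - β₁ * u β₀ β₁ n)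

lemma u_mem {β₀ β₁ : ℝ} (h0 : 0 < β₀) (h0' : β₀ < 1) (h1 : 0 < β₁) (h1' : β₁ < 1) :
    ∀ n, u β₀ β₁ n ∈ Set.Icc (0:ℝ) 1 := by
  intro n
  induction n with
  | zero => exact ⟨zero_le_one, le_refl 1⟩
  | succ n ih =>
    obtain ⟨hl, hr⟩ := ih
    constructor
    · simp only [u]
      nlinarith [mul_nonneg h0.le hl, mul_nonneg h1.le hl,
        mul_le_one₀ h0'.le hl hr, mul_le_one₀ h1'.le hl hr]
    · simp only [u]
      nlinarith [mul_nonneg h0.le hl, mul_nonneg h1.le hl,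
        mul_le_one₀ h0'.le hl hr, mul_le_one₀ h1'.le hl hr]

lemma disjoint_of_lengths {S T : Finset Idx}
    (h : ∀ x ∈ S, ∀ y ∈ T, x.val.length < y.val.length) : Disjoint S T :=
  Finset.disjoint_left.2 fun {x} hx hx' => lt_irrefl _ (h x hx x hx')

lemma disjoint_of_prefixes {S T : Finset Idx} {p q : List Bool}
    (hp : ∀ x ∈ S, p <+: x.val) (hq : ∀ y ∈ T, q <+: y.val)
    (hpq : p.length = q.length) (hne : p ≠ q) : Disjoint S T :=
  Finset.disjoint_left.2 fun {x} hx hx' =>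
    hne ((List.prefix_of_prefix_length_le (hp x hx) (hq x hx') (le_of_eq hpq)).eq_of_length hpq)

lemma tcoord_length {τ : List Bool} {n : ℕ} {x : Idx} (hx : x ∈ tcoord τ n) :
    τ.length < x.val.length := by
  obtain ⟨π, hne, _, heq⟩ := mem_tcoord.1 hx
  rw [heq, List.length_append]
  have : 0 < π.length := List.length_pos_iff.mpr hne
  omega

lemma tcoord_prefix {τ : List Bool} {n : ℕ} {x : Idx} (hx : x ∈ tcoord τ n) :
    τ <+: x.val := by
  obtain ⟨π, _, _, heq⟩ := mem_tcoord.1 hx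
  rw [heq]; exact ⟨π, rfl⟩

lemma disjoint_cnode_tcoord (τ : List Bool) (b : Bool) (n : ℕ) :
    Disjoint ({cnode τ b} : Finset Idx) (tcoord (τ ++ [b]) n) := by
  refine disjoint_of_lengths fun x hx y hy => ?_
  rw [Finset.mem_singleton] at hx
  subst hx
  have := tcoord_length hy
  simpa [cnode] using this


lemma prob_evSet {β₀ β₁ : ℝ} {P : Measure Om} (hP : IsGWMeasure β₀ β₁ P)
    (τ : List Bool) (b : Bool) :
    P (evSet τ b) = ENNReal.ofReal (bprob β₀ β₁ b) := by
  have hset : evSet τ b =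
      {ω : Om | ∀ σ ∈ ({cnode τ b} : Finset Idx), ω σ = (fun _ => true) σ} := by
    ext ω; simp [evSet]
  rw [hset, hP.2, Finset.prod_singleton]
  congr 1
  cases b <;> simp [gwP, cnode, bprob, List.getLast_concat]

lemma prob_survSet {β₀ β₁ : ℝ} (h0 : 0 < β₀) (h0' : β₀ < 1) (h1 : 0 < β₁) (h1' : β₁ < 1)
    {P : Measure Om} (hP : IsGWMeasure β₀ β₁ P) (n : ℕ) :
    ∀ τ, P (SurvSet τ n) = ENNReal.ofReal (u β₀ β₁ n) := by
  haveI := hP.1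
  induction n with
  | zero => intro τ; rw [survSet_zero]; simp [u]
  | succ n ih =>
    intro τ
    have hu0 := (u_mem h0 h0' h1 h1' n).1
    have hu1 := (u_mem h0 h0' h1 h1' n).2
    have dX : DependsOn ({cnode τ false} ∪ tcoord (τ ++ [false]) n)
        (evSet τ false ∩ SurvSet (τ ++ [false]) n) :=
      (evSet_dependsOn τ false).inter (survSet_dependsOn (τ ++ [false]) n)
    have dY : DependsOn ({cnode τ true} ∪ tcoord (τ ++ [true]) n)
        (evSet τ true ∩ SurvSet (τ ++ [true]) n) :=
      (evSet_dependsOn τ true).inter (survSet_dependsOn (τ ++ [true]) n)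
    have hXP : P (evSet τ false ∩ SurvSet (τ ++ [false]) n)
        = ENNReal.ofReal (β₀ * u β₀ β₁ n) := by
      rw [prob_inter h0 h0' h1 h1' hP (evSet_dependsOn τ false)
          (survSet_dependsOn (τ ++ [false]) n) (disjoint_cnode_tcoord τ false n),
        prob_evSet hP, ih, ← ENNReal.ofReal_mul (by simp [bprob, h0.le])]
      simp [bprob]
    have hYP : P (evSet τ true ∩ SurvSet (τ ++ [true]) n)
        = ENNReal.ofReal (β₁ * u β₀ β₁ n) := by
      rw [prob_inter h0 h0' h1 h1' hP (evSet_dependsOn τ true)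
          (survSet_dependsOn (τ ++ [true]) n) (disjoint_cnode_tcoord τ true n),
        prob_evSet hP, ih, ← ENNReal.ofReal_mul (by simp [bprob, h1.le])]
      simp [bprob]
    have hdisj : Disjoint ({cnode τ false} ∪ tcoord (τ ++ [false]) n)
        ({cnode τ true} ∪ tcoord (τ ++ [true]) n) := by
      refine disjoint_of_prefixes (p := τ ++ [false]) (q := τ ++ [true])
        ?_ ?_ (by simp) (by simp)
      · intro x hx
        rcases Finset.mem_union.1 hx with h | h
        · rw [Finset.mem_singleton] at h; rw [h]; exact List.prefix_rfl
        · exact tcoord_prefix h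
      · intro x hx
        rcases Finset.mem_union.1 hx with h | h
        · rw [Finset.mem_singleton] at h; rw [h]; exact List.prefix_rfl
        · exact tcoord_prefix h
    have hXY : P ((evSet τ false ∩ SurvSet (τ ++ [false]) n) ∩
        (evSet τ true ∩ SurvSet (τ ++ [true]) n))
        = ENNReal.ofReal ((β₀ * u β₀ β₁ n) * (β₁ * u β₀ β₁ n)) := by
      rw [prob_inter h0 h0' h1 h1' hP dX dY hdisj, hXP, hYP,
        ← ENNReal.ofReal_mul (by positivity)]
    have hkey := measure_union_add_inter (μ := P)
      (evSet τ false ∩ SurvSet (τ ++ [false]) n) dY.measurableSet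
    rw [survSet_succ]
    have harith : ENNReal.ofReal (u β₀ β₁ (n+1))
        + ENNReal.ofReal ((β₀ * u β₀ β₁ n) * (β₁ * u β₀ β₁ n))
        = ENNReal.ofReal (β₀ * u β₀ β₁ n) + ENNReal.ofReal (β₁ * u β₀ β₁ n) := by
      rw [← ENNReal.ofReal_add (u_mem h0 h0' h1 h1' (n+1)).1 (by positivity),
        ← ENNReal.ofReal_add (by positivity) (by positivity)]
      congr 1
      simp only [u]; ring
    refine (ENNReal.add_left_inj (a := ENNReal.ofReal ((β₀ * u β₀ β₁ n) * (β₁ * u β₀ β₁ n)))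
      ENNReal.ofReal_ne_top).mp ?_
    rw [← hXY, hkey, hXP, hYP, hXY]; exact harith.symm


def pfx (σ : List Bool) : Finset Idx := σ.inits.toFinset.subtype (fun l => l ≠ [])

lemma mem_pfx {σ : List Bool} {x : Idx} : x ∈ pfx σ ↔ x.val <+: σ := by
  simp [pfx, List.mem_inits]

def treeSet (σ : List Bool) : Set Om := {ω | σ ∈ gwTree ω}

lemma treeSet_eq (σ : List Bool) :
    treeSet σ = {ω : Om | ∀ τ ∈ pfx σ, ω τ = (fun _ => true) τ} := by
  ext ω
  simp only [treeSet, gwTree, Set.mem_setOf_eq]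
  exact ⟨fun h τ hτ => h τ (mem_pfx.1 hτ), fun h τ hτ => h τ (mem_pfx.2 hτ)⟩

lemma treeSet_dependsOn (σ : List Bool) : DependsOn (pfx σ) (treeSet σ) := by
  rw [treeSet_eq]
  intro ω ω' hag h τ hτ
  rw [← hag τ hτ]; exact h τ hτ

noncomputable def w (β₀ β₁ : ℝ) (σ : List Bool) : ℝ := ∏ τ ∈ pfx σ, gwP β₀ β₁ τ true

lemma prob_treeSet {β₀ β₁ : ℝ} {P : Measure Om} (hP : IsGWMeasure β₀ β₁ P) (σ : List Bool) :
    P (treeSet σ) = ENNReal.ofReal (w β₀ β₁ σ) := by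
  rw [treeSet_eq]; exact hP.2 (pfx σ) (fun _ => true)

lemma w_pos {β₀ β₁ : ℝ} (h0 : 0 < β₀) (h1 : 0 < β₁) (σ : List Bool) : 0 < w β₀ β₁ σ := by
  refine Finset.prod_pos fun τ _ => ?_
  simp only [gwP, if_true]
  split_ifs <;> assumption

lemma pfx_length {σ : List Bool} {x : Idx} (hx : x ∈ pfx σ) : x.val.length ≤ σ.length :=
  (mem_pfx.1 hx).length_le

lemma treeSet_child (σ : List Bool) (b : Bool) :
    treeSet (σ ++ [b]) = treeSet σ ∩ evSet σ b := by
  ext ω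
  simp only [treeSet, gwTree, Set.mem_setOf_eq, Set.mem_inter_iff]
  constructor
  · intro h
    exact ⟨fun τ hpre => h τ (hpre.trans ⟨[b], rfl⟩), h (cnode σ b) List.prefix_rfl⟩
  · rintro ⟨h1, h2⟩ τ hpre
    rcases List.prefix_concat_iff.mp hpre with heq | hpre'
    · have : τ = cnode σ b := Subtype.ext heq
      rw [this]; exact h2
    · exact h1 τ hpre'

lemma prune_eq (τ : List Bool) :
    {ω : Om | τ ∈ gwPrune ω} = treeSet τ ∩ ⋂ n, SurvSet τ n := by
  ext ω
  simp only [Set.mem_setOf_eq, gwPrune, Set.mem_inter_iff, Set.mem_iInter]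
  constructor
  · rintro ⟨ht, hinf⟩
    refine ⟨ht, fun n => ?_⟩
    obtain ⟨ρ, ⟨hpre, htree⟩, hlen⟩ :
        ∃ ρ ∈ {ρ | τ <+: ρ ∧ ρ ∈ gwTree ω}, τ.length + n ≤ ρ.length := by
      by_contra hcon
      push_neg at hcon
      exact hinf (Set.Finite.subset (List.finite_length_le Bool (τ.length + n))
        (fun ρ hρ => le_of_lt (hcon ρ hρ)))
    set ρ' := ρ.take (τ.length + n) with hρ'
    have hρ'pre : ρ' <+: ρ := List.take_prefix _ _
    have hρ'len : ρ'.length = τ.length + n := by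
      rw [hρ', List.length_take]; exact min_eq_left hlen
    have hτρ' : τ <+: ρ' :=
      List.prefix_of_prefix_length_le hpre hρ'pre (by omega)
    obtain ⟨π, hπ⟩ := hτρ'
    have hπlen : π.length = n := by
      have := congrArg List.length hπ
      simp only [List.length_append] at this
      omega
    refine ⟨π, hπlen, fun π₀ hπ₀ hpre₀ => ?_⟩
    have : τ ++ π₀ <+: ρ := (((List.prefix_append_right_inj τ).mpr hpre₀).trans
      (hπ ▸ hρ'pre))
    exact htree ⟨τ ++ π₀, apne hπ₀⟩ this
  · rintro ⟨ht, hsurv⟩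
    refine ⟨ht, ?_⟩
    choose ρ hlen hρ using hsurv
    refine Set.infinite_of_injective_forall_mem (f := fun n : ℕ => τ ++ ρ (n+1)) ?_ ?_
    · intro a b h
      have := congrArg List.length h
      simp only [List.length_append, hlen] at this
      omega
    · intro n
      refine ⟨⟨ρ (n+1), rfl⟩, fun χ hpre => ?_⟩
      by_cases hsmall : χ.val.length ≤ τ.length
      · exact ht χ (List.prefix_of_prefix_length_le hpre ⟨ρ (n+1), rfl⟩ hsmall)
      · have hτχ : τ <+: χ.val :=
          List.prefix_of_prefix_length_le ⟨ρ (n+1), rfl⟩ hpre (by omega)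
        obtain ⟨π, hπ⟩ := hτχ
        have hπne : π ≠ [] := by
          intro hc; rw [hc, List.append_nil] at hπ
          rw [← hπ] at hsmall; omega
        have hπpre : π <+: ρ (n+1) := by
          rw [← hπ] at hpre
          exact (List.prefix_append_right_inj τ).mp hpre
        have h2 := hρ (n+1) π hπne hπpre
        convert h2 using 2
        exact Subtype.ext hπ.symm

lemma prune_subset (σ : List Bool) (b : Bool) :
    {ω : Om | σ ++ [b] ∈ gwPrune ω} ⊆ {ω : Om | σ ∈ gwPrune ω} := by
  rintro ω ⟨ht, hinf⟩
  refine ⟨fun χ hpre => ht χ (hpre.trans ⟨[b], rfl⟩), hinf.mono ?_⟩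
  rintro ρ ⟨hpre, htree⟩
  exact ⟨(show σ <+: σ ++ [b] from ⟨[b], rfl⟩).trans hpre, htree⟩


noncomputable def xval (β₀ β₁ : ℝ) : ℝ := (β₀ + β₁ - 1) / (β₀ * β₁)

section Analysis

variable {β₀ β₁ : ℝ} (h0 : 0 < β₀) (h0' : β₀ < 1) (h1 : 0 < β₁) (h1' : β₁ < 1)
  (hsum : 1 < β₀ + β₁)

include h0 h0' h1 h1' hsum

lemma hpx : β₀ * β₁ * xval β₀ β₁ = β₀ + β₁ - 1 := by
  have : β₀ * β₁ ≠ 0 := by positivity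
  rw [xval]; field_simp

lemma xval_pos : 0 < xval β₀ β₁ := div_pos (by linarith) (by positivity)

lemma xval_le_one : xval β₀ β₁ ≤ 1 := by
  rw [xval, div_le_one (by positivity)]
  nlinarith

lemma xval_fix : 1 - (1 - β₀ * xval β₀ β₁) * (1 - β₁ * xval β₀ β₁) = xval β₀ β₁ := by
  have hp := hpx h0 h0' h1 h1' hsum
  nlinarith [hp, xval_pos h0 h0' h1 h1' hsum]

lemma u_ge_xval : ∀ n, xval β₀ β₁ ≤ u β₀ β₁ n := by
  intro n
  induction n with
  | zero => exact xval_le_one h0 h0' h1 h1' hsum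
  | succ n ih =>
    have hu0 := (u_mem h0 h0' h1 h1' n).1
    have hu1 := (u_mem h0 h0' h1 h1' n).2
    have hx1 := xval_le_one h0 h0' h1 h1' hsum
    have hfactor : 0 ≤ β₀ + β₁ - β₀ * β₁ * (u β₀ β₁ n + xval β₀ β₁) := by
      nlinarith [mul_pos h0 h1]
    have key : 0 ≤ (u β₀ β₁ n - xval β₀ β₁) *
        (β₀ + β₁ - β₀ * β₁ * (u β₀ β₁ n + xval β₀ β₁)) :=
      mul_nonneg (by linarith) hfactor
    have hfix := xval_fix h0 h0' h1 h1' hsum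
    have hdiff : (1 - (1 - β₀ * u β₀ β₁ n) * (1 - β₁ * u β₀ β₁ n)) - xval β₀ β₁
        = (u β₀ β₁ n - xval β₀ β₁) * (β₀ + β₁ - β₀ * β₁ * (u β₀ β₁ n + xval β₀ β₁)) := by
      linear_combination hfix
    show xval β₀ β₁ ≤ 1 - (1 - β₀ * u β₀ β₁ n) * (1 - β₁ * u β₀ β₁ n)
    linarith [hdiff, key]

lemma u_antitone : Antitone (u β₀ β₁) := by
  refine antitone_nat_of_succ_le fun n => ?_
  have hu0 := (u_mem h0 h0' h1 h1' n).1
  have hge := u_ge_xval h0 h0' h1 h1' hsum n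
  have hp := hpx h0 h0' h1 h1' hsum
  have hid : (1 - (1 - β₀ * u β₀ β₁ n) * (1 - β₁ * u β₀ β₁ n)) - u β₀ β₁ n
      = -(β₀ * β₁ * u β₀ β₁ n * (u β₀ β₁ n - xval β₀ β₁)) := by
    linear_combination -(u β₀ β₁ n) * hp
  have hnn : 0 ≤ β₀ * β₁ * u β₀ β₁ n * (u β₀ β₁ n - xval β₀ β₁) :=
    mul_nonneg (by positivity) (by linarith)
  show 1 - (1 - β₀ * u β₀ β₁ n) * (1 - β₁ * u β₀ β₁ n) ≤ u β₀ β₁ n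
  linarith [hid, hnn]

lemma u_tendsto : Filter.Tendsto (u β₀ β₁) Filter.atTop (nhds (xval β₀ β₁)) := by
  have hanti := u_antitone h0 h0' h1 h1' hsum
  have hbdd : BddBelow (Set.range (u β₀ β₁)) := by
    refine ⟨xval β₀ β₁, ?_⟩
    rintro y ⟨n, rfl⟩
    exact u_ge_xval h0 h0' h1 h1' hsum n
  have hconv := tendsto_atTop_ciInf hanti hbdd
  set L := ⨅ n, u β₀ β₁ n with hLdef
  have hLge : xval β₀ β₁ ≤ L :=
    le_ciInf (u_ge_xval h0 h0' h1 h1' hsum)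
  have hLfix : 1 - (1 - β₀ * L) * (1 - β₁ * L) = L := by
    have h₁ : Filter.Tendsto (fun n => u β₀ β₁ (n+1)) Filter.atTop (nhds L) :=
      hconv.comp (Filter.tendsto_add_atTop_nat 1)
    have h₂ : Filter.Tendsto (fun n => 1 - (1 - β₀ * u β₀ β₁ n) * (1 - β₁ * u β₀ β₁ n))
        Filter.atTop (nhds (1 - (1 - β₀ * L) * (1 - β₁ * L))) :=
      tendsto_const_nhds.sub ((tendsto_const_nhds.sub (hconv.const_mul β₀)).mul
        (tendsto_const_nhds.sub (hconv.const_mul β₁)))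
    exact tendsto_nhds_unique h₂ (by simpa [u] using h₁)
  have hLx : L = xval β₀ β₁ := by
    have hp := hpx h0 h0' h1 h1' hsum
    have hid : β₀ * β₁ * L * (L - xval β₀ β₁) = 0 := by
      linear_combination -L * hp - hLfix
    rcases mul_eq_zero.mp hid with h | h
    · exfalso
      have hL0 : 0 < L := lt_of_lt_of_le (xval_pos h0 h0' h1 h1' hsum) hLge
      have : 0 < β₀ * β₁ * L := by positivity
      linarith
    · linarith
  rw [← hLx]; exact hconv

end Analysis

lemma measure_iInter_eq {P : Measure Om} (hprob : IsProbabilityMeasure P) {A : ℕ → Set Om}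
    (hm : ∀ n, MeasurableSet (A n)) (hA : Antitone A) {c : ℕ → ℝ} {L : ℝ}
    (hc : ∀ n, P (A n) = ENNReal.ofReal (c n))
    (hL : Filter.Tendsto c Filter.atTop (nhds L)) :
    P (⋂ n, A n) = ENNReal.ofReal L := by
  have h1 := MeasureTheory.tendsto_measure_iInter_atTop (μ := P)
    (fun n => (hm n).nullMeasurableSet) hA ⟨0, measure_ne_top P _⟩
  have h2 : Filter.Tendsto (⇑P ∘ A) Filter.atTop (nhds (ENNReal.ofReal L)) := by
    have : ⇑P ∘ A = fun n => ENNReal.ofReal (c n) := funext hc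
    rw [this]
    exact ENNReal.tendsto_ofReal hL
  exact tendsto_nhds_unique h1 h2


lemma child_length {τ : List Bool} {b : Bool} {n : ℕ} {x : Idx}
    (hx : x ∈ ({cnode τ b} : Finset Idx) ∪ tcoord (τ ++ [b]) n) :
    τ.length < x.val.length := by
  rcases Finset.mem_union.1 hx with h | h
  · rw [Finset.mem_singleton] at h; subst h; simp [cnode]
  · have := tcoord_length h; simp only [List.length_append, List.length_singleton] at this; omega

lemma child_prefix {τ : List Bool} {b : Bool} {n : ℕ} {x : Idx}
    (hx : x ∈ ({cnode τ b} : Finset Idx) ∪ tcoord (τ ++ [b]) n) :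
    τ ++ [b] <+: x.val := by
  rcases Finset.mem_union.1 hx with h | h
  · rw [Finset.mem_singleton] at h; subst h; exact List.prefix_rfl
  · exact tcoord_prefix h

lemma disjoint_children (τ : List Bool) (n m : ℕ) :
    Disjoint (({cnode τ false} : Finset Idx) ∪ tcoord (τ ++ [false]) n)
      (({cnode τ true} : Finset Idx) ∪ tcoord (τ ++ [true]) m) :=
  disjoint_of_prefixes (p := τ ++ [false]) (q := τ ++ [true])
    (fun x hx => child_prefix hx) (fun y hy => child_prefix hy) (by simp) (by simp)

lemma disjoint_pfx_child (σ : List Bool) (b : Bool) (n : ℕ) :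
    Disjoint (pfx σ) (({cnode σ b} : Finset Idx) ∪ tcoord (σ ++ [b]) n) :=
  disjoint_of_lengths fun x hx y hy => lt_of_le_of_lt (pfx_length hx) (child_length hy)

lemma disjoint_pfx_tcoord (σ : List Bool) (n : ℕ) : Disjoint (pfx σ) (tcoord σ n) :=
  disjoint_of_lengths fun x hx y hy => lt_of_le_of_lt (pfx_length hx) (tcoord_length hy)

lemma child_dependsOn (τ : List Bool) (b : Bool) (n : ℕ) :
    DependsOn (({cnode τ b} : Finset Idx) ∪ tcoord (τ ++ [b]) n)
      (evSet τ b ∩ SurvSet (τ ++ [b]) n) :=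
  (evSet_dependsOn τ b).inter (survSet_dependsOn (τ ++ [b]) n)

section Final

variable {β₀ β₁ : ℝ} (h0 : 0 < β₀) (h0' : β₀ < 1) (h1 : 0 < β₁) (h1' : β₁ < 1)
  (hsum : 1 < β₀ + β₁) {P : Measure Om} (hP : IsGWMeasure β₀ β₁ P)

include h0 h0' h1 h1' hsum hP

set_option linter.unusedSectionVars false

lemma prob_child (τ : List Bool) (b : Bool) (n : ℕ) :
    P (evSet τ b ∩ SurvSet (τ ++ [b]) n)
      = ENNReal.ofReal (bprob β₀ β₁ b * u β₀ β₁ n) := by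
  rw [prob_inter h0 h0' h1 h1' hP (evSet_dependsOn τ b)
      (survSet_dependsOn (τ ++ [b]) n) (disjoint_cnode_tcoord τ b n),
    prob_evSet hP, prob_survSet h0 h0' h1 h1' hP n,
    ← ENNReal.ofReal_mul (by cases b <;> simp [bprob, h0.le, h1.le])]

lemma prob_denom (σ : List Bool) :
    P {ω : Om | σ ∈ gwPrune ω} = ENNReal.ofReal (w β₀ β₁ σ * xval β₀ β₁) := by
  haveI := hP.1
  have hiInter : {ω : Om | σ ∈ gwPrune ω} = ⋂ n, (treeSet σ ∩ SurvSet σ n) := by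
    rw [prune_eq σ, Set.inter_iInter]
  rw [hiInter]
  refine measure_iInter_eq hP.1
    (fun n => ((treeSet_dependsOn σ).inter (survSet_dependsOn σ n)).measurableSet)
    (fun m n hmn => Set.inter_subset_inter_right _ (survSet_antitone σ hmn))
    (fun n => ?_) ((u_tendsto h0 h0' h1 h1' hsum).const_mul (w β₀ β₁ σ))
  rw [prob_inter h0 h0' h1 h1' hP (treeSet_dependsOn σ) (survSet_dependsOn σ n)
      (disjoint_pfx_tcoord σ n), prob_treeSet hP, prob_survSet h0 h0' h1 h1' hP n,
    ← ENNReal.ofReal_mul (w_pos h0 h1 σ).le]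

lemma prob_t1 (σ : List Bool) :
    P {ω : Om | σ ++ [false] ∈ gwPrune ω}
      = ENNReal.ofReal (w β₀ β₁ σ * (β₀ * xval β₀ β₁)) := by
  haveI := hP.1
  have hiInter : {ω : Om | σ ++ [false] ∈ gwPrune ω}
      = ⋂ n, (treeSet σ ∩ (evSet σ false ∩ SurvSet (σ ++ [false]) n)) := by
    rw [prune_eq (σ ++ [false]), treeSet_child σ false, Set.inter_assoc,
      Set.inter_iInter, Set.inter_iInter]
  rw [hiInter]
  refine measure_iInter_eq hP.1
    (fun n => ((treeSet_dependsOn σ).inter (child_dependsOn σ false n)).measurableSet)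
    (fun m n hmn => Set.inter_subset_inter_right _
      (Set.inter_subset_inter_right _ (survSet_antitone (σ ++ [false]) hmn)))
    (fun n => ?_)
    (((u_tendsto h0 h0' h1 h1' hsum).const_mul β₀).const_mul (w β₀ β₁ σ))
  rw [prob_inter h0 h0' h1 h1' hP (treeSet_dependsOn σ) (child_dependsOn σ false n)
      (disjoint_pfx_child σ false n), prob_treeSet hP, prob_child h0 h0' h1 h1' hsum hP,
    ← ENNReal.ofReal_mul (w_pos h0 h1 σ).le]
  simp [bprob]

lemma prob_t2 (σ : List Bool) :
    P ({ω : Om | σ ++ [false] ∈ gwPrune ω} ∩ {ω : Om | σ ++ [true] ∈ gwPrune ω})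
      = ENNReal.ofReal (w β₀ β₁ σ * ((β₀ * xval β₀ β₁) * (β₁ * xval β₀ β₁))) := by
  haveI := hP.1
  have hiInter : {ω : Om | σ ++ [false] ∈ gwPrune ω} ∩ {ω : Om | σ ++ [true] ∈ gwPrune ω}
      = ⋂ n, (treeSet σ ∩ ((evSet σ false ∩ SurvSet (σ ++ [false]) n) ∩
          (evSet σ true ∩ SurvSet (σ ++ [true]) n))) := by
    rw [prune_eq (σ ++ [false]), prune_eq (σ ++ [true]), treeSet_child σ false,
      treeSet_child σ true]
    ext ω
    simp only [Set.mem_inter_iff, Set.mem_iInter]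
    constructor
    · rintro ⟨⟨⟨ht, he0⟩, hs0⟩, ⟨⟨_, he1⟩, hs1⟩⟩
      exact fun n => ⟨ht, ⟨he0, hs0 n⟩, ⟨he1, hs1 n⟩⟩
    · intro h
      exact ⟨⟨⟨(h 0).1, (h 0).2.1.1⟩, fun n => (h n).2.1.2⟩,
        ⟨⟨(h 0).1, (h 0).2.2.1⟩, fun n => (h n).2.2.2⟩⟩
  rw [hiInter]
  have htend : Filter.Tendsto
      (fun n => w β₀ β₁ σ * ((β₀ * u β₀ β₁ n) * (β₁ * u β₀ β₁ n))) Filter.atTop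
      (nhds (w β₀ β₁ σ * ((β₀ * xval β₀ β₁) * (β₁ * xval β₀ β₁)))) := by
    have hu := u_tendsto h0 h0' h1 h1' hsum
    exact (((hu.const_mul β₀).mul (hu.const_mul β₁))).const_mul (w β₀ β₁ σ)
  refine measure_iInter_eq hP.1
    (fun n => ((treeSet_dependsOn σ).inter
      ((child_dependsOn σ false n).inter (child_dependsOn σ true n))).measurableSet)
    (fun m n hmn => Set.inter_subset_inter_right _ (Set.inter_subset_inter
      (Set.inter_subset_inter_right _ (survSet_antitone (σ ++ [false]) hmn))
      (Set.inter_subset_inter_right _ (survSet_antitone (σ ++ [true]) hmn))))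
    (fun n => ?_) htend
  rw [prob_inter h0 h0' h1 h1' hP (treeSet_dependsOn σ)
      ((child_dependsOn σ false n).inter (child_dependsOn σ true n))
      (Finset.disjoint_union_right.mpr
        ⟨disjoint_pfx_child σ false n, disjoint_pfx_child σ true n⟩),
    prob_treeSet hP,
    prob_inter h0 h0' h1 h1' hP (child_dependsOn σ false n) (child_dependsOn σ true n)
      (disjoint_children σ n n),
    prob_child h0 h0' h1 h1' hsum hP, prob_child h0 h0' h1 h1' hsum hP,
    ← ENNReal.ofReal_mul (by simp only [bprob, if_pos]; exact mul_nonneg h0.le (u_mem h0 h0' h1 h1' n).1),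
    ← ENNReal.ofReal_mul (w_pos h0 h1 σ).le]
  simp [bprob]

end Final


lemma measurableSet_prune (τ : List Bool) : MeasurableSet {ω : Om | τ ∈ gwPrune ω} := by
  rw [prune_eq]
  exact (treeSet_dependsOn τ).measurableSet.inter
    (MeasurableSet.iInter fun n => (survSet_dependsOn τ n).measurableSet)

end GW

/-- For `β₀, β₁ ∈ (0,1)` with `β₀ + β₁ > 1` and every finite binary string
`σ`: the conditional probability, given `σ ∈ Prune(ω)`, that `σ` has only a left child in
`Prune(ω)` (i.e. `σ0 ∈ Prune(ω)` and `σ1 ∉ Prune(ω)`) is `1 - β₁`. -/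
theorem stmt9 (β₀ β₁ : ℝ) (h0 : β₀ ∈ Set.Ioo (0 : ℝ) 1) (h1 : β₁ ∈ Set.Ioo (0 : ℝ) 1)
    (hsum : 1 < β₀ + β₁)
    (P : Measure ({σ : List Bool // σ ≠ []} → Bool)) (hP : IsGWMeasure β₀ β₁ P)
    (σ : List Bool) :
    ProbabilityTheory.cond P {ω | σ ∈ gwPrune ω}
        {ω | σ ++ [false] ∈ gwPrune ω ∧ σ ++ [true] ∉ gwPrune ω} =
      ENNReal.ofReal (1 - β₁) := by

  obtain ⟨h0a, h0b⟩ := h0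
  obtain ⟨h1a, h1b⟩ := h1
  haveI := hP.1
  set x := GW.xval β₀ β₁ with hxdef
  set W := GW.w β₀ β₁ σ with hWdef
  have hx0 : 0 < x := GW.xval_pos h0a h0b h1a h1b hsum
  have hW0 : 0 < W := GW.w_pos h0a h1a σ
  have hts : {ω : GW.Om | σ ++ [false] ∈ gwPrune ω ∧ σ ++ [true] ∉ gwPrune ω}
      ⊆ {ω | σ ∈ gwPrune ω} := fun ω hω => GW.prune_subset σ false hω.1
  have htdiff : {ω : GW.Om | σ ++ [false] ∈ gwPrune ω ∧ σ ++ [true] ∉ gwPrune ω}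
      = {ω : GW.Om | σ ++ [false] ∈ gwPrune ω} \
        ({ω : GW.Om | σ ++ [false] ∈ gwPrune ω} ∩
          {ω : GW.Om | σ ++ [true] ∈ gwPrune ω}) := by
    ext ω
    simp only [Set.mem_setOf_eq, Set.mem_diff, Set.mem_inter_iff]
    tauto
  have hmeas2 : MeasurableSet ({ω : GW.Om | σ ++ [false] ∈ gwPrune ω} ∩
      {ω : GW.Om | σ ++ [true] ∈ gwPrune ω}) :=
    (GW.measurableSet_prune (σ ++ [false])).inter (GW.measurableSet_prune (σ ++ [true]))
  have hdiffP : P {ω : GW.Om | σ ++ [false] ∈ gwPrune ω ∧ σ ++ [true] ∉ gwPrune ω}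
      = P {ω : GW.Om | σ ++ [false] ∈ gwPrune ω} -
        P ({ω : GW.Om | σ ++ [false] ∈ gwPrune ω} ∩
          {ω : GW.Om | σ ++ [true] ∈ gwPrune ω}) := by
    rw [htdiff]
    exact measure_diff Set.inter_subset_left hmeas2.nullMeasurableSet (measure_ne_top P _)
  rw [ProbabilityTheory.cond_apply (GW.measurableSet_prune σ) P,
    Set.inter_eq_self_of_subset_right hts, hdiffP,
    GW.prob_t1 h0a h0b h1a h1b hsum hP σ, GW.prob_t2 h0a h0b h1a h1b hsum hP σ,
    GW.prob_denom h0a h0b h1a h1b hsum hP σ]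
  have hq : (0:ℝ) ≤ W * ((β₀ * x) * (β₁ * x)) := by positivity
  have hbx : W * (β₀ * x) - W * ((β₀ * x) * (β₁ * x)) = (W * x) * (1 - β₁) := by
    have hp := GW.hpx h0a h0b h1a h1b hsum
    linear_combination (-(W * x)) * hp
  rw [← ENNReal.ofReal_sub _ hq, hbx, ENNReal.ofReal_mul (mul_nonneg hW0.le hx0.le),
    ← mul_assoc, ENNReal.inv_mul_cancel
      (ENNReal.ofReal_pos.mpr (by positivity)).ne' ENNReal.ofReal_ne_top, one_mul]
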